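/- Let {π^i_j : B_i → B_{ij} = B_{ji}}_{i ≠ j ∈ {1,2,3}} be a family of surjective homomorphisms of unital algebras satisfying the cocycle condition, such that for each i the kernels {ker π^i_j : j ≠ i} generate a distributive sublattice of ideals of B_i, and such that the kernels I_i := ker π_i of the restricted canonical projections π_i : B^π → B_i generate a distributive sublattice of ideals of the multi-pullback B^π. Then: (i) the maps π₁₃ := π^1_3 ∘ π₁ : B^π → B₁₃ and π₂₃ := π^2_3 ∘ π₂ : B^π → B₂₃ are surjective; (ii) there are well-defined surjective homomorphisms η¹ : B₁₃ → B^π/(I₁+I₂+I₃) and η² : B₂₃ → B^π/(I₁+I₂+I₃) given by η^i(b) := b̃ + (I₁+I₂+I₃) for any b̃ ∈ B^π with π^i_3(π_i(b̃)) = b, i.e. the value is independent of the choice of the lift b̃; and (iii) η¹ ∘ π₁₃ = η² ∘ π₂₃ is the canonical quotient map B^π → B^π/(I₁+I₂+I₃). -/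

import Mathlib

set_option synthInstance.maxHeartbeats 1000000
set_option maxHeartbeats 1000000

/-!
**Statement 7** (Corollary 1.4 of the paper), for a family
`π^i_j : B_i → B_{ij} = B_{ji}` (`i ≠ j ∈ {1,2,3}`) of surjective homomorphisms of
unital `k`-algebras, written with the six algebra maps
`p12 : B₁ → B₁₂`, `p21 : B₂ → B₁₂`, `p13 : B₁ → B₁₃`, `p31 : B₃ → B₁₃`,
`p23 : B₂ → B₂₃`, `p32 : B₃ → B₂₃`.
-/

/-- Membership in the sublattice generated by a set `S` in a lattice. -/
inductive InSublattice {α : Type*} [Lattice α] (S : Set α) : α → Prop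
  | base {x : α} : x ∈ S → InSublattice S x
  | inf {x y : α} : InSublattice S x → InSublattice S y → InSublattice S (x ⊓ y)
  | sup {x y : α} : InSublattice S x → InSublattice S y → InSublattice S (x ⊔ y)

/-- The canonical factor map between quotients by nested two-sided ideals. -/
def quotFactorHom {B : Type*} [Ring B] {I J : TwoSidedIdeal B} (h : I ≤ J) :
    I.ringCon.Quotient →+* J.ringCon.Quotient where
  toFun := Quotient.map' id (fun _ _ hab => TwoSidedIdeal.ringCon_le_iff.mp h hab)
  map_one' := rfl
  map_mul' := by rintro ⟨x⟩ ⟨y⟩; rfl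
  map_zero' := rfl
  map_add' := by rintro ⟨x⟩ ⟨y⟩; rfl

/-- The canonical factor map between quotients by nested two-sided ideals, as an
algebra homomorphism. -/
def quotFactorAlg (k : Type*) [CommRing k] {B : Type*} [Ring B] [Algebra k B]
    {I J : TwoSidedIdeal B} (h : I ≤ J) :
    I.ringCon.Quotient →ₐ[k] J.ringCon.Quotient :=
  { quotFactorHom h with commutes' := fun _ => rfl }


section Aux

open Function in
/-- Factor a surjective algebra hom through a quotient by a two-sided ideal
containing its kernel. -/
theorem algHomFactor {k A B : Type*} [CommRing k] [Ring A] [Ring B]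
    [Algebra k A] [Algebra k B] (φ : A →ₐ[k] B) (hφ : Function.Surjective φ)
    (J : TwoSidedIdeal A) (h : ∀ a, φ a = 0 → a ∈ J) :
    ∃ η : B →ₐ[k] J.ringCon.Quotient,
      (∀ a, η (φ a) = J.ringCon.mk' a) ∧ Function.Surjective η := by
  have hrel : ∀ a b : A, φ a = φ b → J.ringCon.mk' a = J.ringCon.mk' b := by
    intro a b hab
    exact J.ringCon.eq.mpr ((J.rel_iff a b).2 (h _ (by rw [map_sub, hab, sub_self])))
  have hf : ∀ a, J.ringCon.mk' (surjInv hφ (φ a)) = J.ringCon.mk' a :=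
    fun a => hrel _ _ (surjInv_eq hφ _)
  refine ⟨{ toFun := fun x => J.ringCon.mk' (surjInv hφ x)
            map_one' := by
              show J.ringCon.mk' (surjInv hφ 1) = 1
              have := hf 1; rwa [map_one, map_one] at this
            map_mul' := fun x y => by
              obtain ⟨a, rfl⟩ := hφ x; obtain ⟨b, rfl⟩ := hφ y
              show J.ringCon.mk' (surjInv hφ (φ a * φ b)) =
                J.ringCon.mk' (surjInv hφ (φ a)) * J.ringCon.mk' (surjInv hφ (φ b))
              rw [hf, hf, ← map_mul φ, hf, map_mul]
            map_zero' := by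
              show J.ringCon.mk' (surjInv hφ 0) = 0
              have := hf 0; rwa [map_zero, map_zero] at this
            map_add' := fun x y => by
              obtain ⟨a, rfl⟩ := hφ x; obtain ⟨b, rfl⟩ := hφ y
              show J.ringCon.mk' (surjInv hφ (φ a + φ b)) =
                J.ringCon.mk' (surjInv hφ (φ a)) + J.ringCon.mk' (surjInv hφ (φ b))
              rw [hf, hf, ← map_add φ, hf, map_add]
            commutes' := fun r => by
              show J.ringCon.mk' (surjInv hφ (algebraMap k B r)) = _
              have := hf (algebraMap k A r)
              rw [AlgHom.commutes] at this
              exact this }, hf, ?_⟩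
  rintro ⟨a⟩
  exact ⟨φ a, hf a⟩

end Aux

variable (k : Type*) [CommRing k]
  (B₁ B₂ B₃ B₁₂ B₁₃ B₂₃ : Type*)
  [Ring B₁] [Ring B₂] [Ring B₃] [Ring B₁₂] [Ring B₁₃] [Ring B₂₃]
  [Algebra k B₁] [Algebra k B₂] [Algebra k B₃]
  [Algebra k B₁₂] [Algebra k B₁₃] [Algebra k B₂₃]
  (p12 : B₁ →ₐ[k] B₁₂) (p21 : B₂ →ₐ[k] B₁₂)
  (p13 : B₁ →ₐ[k] B₁₃) (p31 : B₃ →ₐ[k] B₁₃)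
  (p23 : B₂ →ₐ[k] B₂₃) (p32 : B₃ →ₐ[k] B₂₃)

/-- The multi-pullback (triple-pullback) `B^π`, as a subalgebra of `B₁ × B₂ × B₃`. -/
def triplePullback : Subalgebra k (B₁ × B₂ × B₃) where
  carrier := {b | p12 b.1 = p21 b.2.1 ∧ p13 b.1 = p31 b.2.2 ∧ p23 b.2.1 = p32 b.2.2}
  mul_mem' := by
    rintro x y ⟨hx1, hx2, hx3⟩ ⟨hy1, hy2, hy3⟩
    refine ⟨?_, ?_, ?_⟩ <;>
      simp only [Prod.fst_mul, Prod.snd_mul, map_mul, hx1, hx2, hx3, hy1, hy2, hy3]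
  one_mem' := by
    refine ⟨?_, ?_, ?_⟩ <;> simp only [Prod.fst_one, Prod.snd_one, map_one]
  add_mem' := by
    rintro x y ⟨hx1, hx2, hx3⟩ ⟨hy1, hy2, hy3⟩
    refine ⟨?_, ?_, ?_⟩ <;>
      simp only [Prod.fst_add, Prod.snd_add, map_add, hx1, hx2, hx3, hy1, hy2, hy3]
  zero_mem' := by
    refine ⟨?_, ?_, ?_⟩ <;> simp only [Prod.fst_zero, Prod.snd_zero, map_zero]
  algebraMap_mem' := by
    intro r
    refine ⟨?_, ?_, ?_⟩ <;> simp [Prod.algebraMap_apply, AlgHom.commutes]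

/-- The restriction `π₁ : B^π → B₁` of the first canonical projection. -/
def tpProj₁ : triplePullback k B₁ B₂ B₃ B₁₂ B₁₃ B₂₃ p12 p21 p13 p31 p23 p32 →ₐ[k] B₁ :=
  (AlgHom.fst k B₁ (B₂ × B₃)).comp
    (triplePullback k B₁ B₂ B₃ B₁₂ B₁₃ B₂₃ p12 p21 p13 p31 p23 p32).val

/-- The restriction `π₂ : B^π → B₂` of the second canonical projection. -/
def tpProj₂ : triplePullback k B₁ B₂ B₃ B₁₂ B₁₃ B₂₃ p12 p21 p13 p31 p23 p32 →ₐ[k] B₂ :=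
  (AlgHom.fst k B₂ B₃).comp ((AlgHom.snd k B₁ (B₂ × B₃)).comp
    (triplePullback k B₁ B₂ B₃ B₁₂ B₁₃ B₂₃ p12 p21 p13 p31 p23 p32).val)

/-- The restriction `π₃ : B^π → B₃` of the third canonical projection. -/
def tpProj₃ : triplePullback k B₁ B₂ B₃ B₁₂ B₁₃ B₂₃ p12 p21 p13 p31 p23 p32 →ₐ[k] B₃ :=
  (AlgHom.snd k B₂ B₃).comp ((AlgHom.snd k B₁ (B₂ × B₃)).comp
    (triplePullback k B₁ B₂ B₃ B₁₂ B₁₃ B₂₃ p12 p21 p13 p31 p23 p32).val)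

/-- **Corollary 1.4.** -/
theorem eta_maps_wellDefined_surjective
    -- the family consists of epimorphisms:
    (h12 : Function.Surjective p12) (h21 : Function.Surjective p21)
    (h13 : Function.Surjective p13) (h31 : Function.Surjective p31)
    (h23 : Function.Surjective p23) (h32 : Function.Surjective p32)
    -- cocycle condition, part (1): `π^i_j(ker π^i_k) = π^j_i(ker π^j_k)`:
    (hco1a : p12 '' (TwoSidedIdeal.ker p13 : Set B₁) =
             p21 '' (TwoSidedIdeal.ker p23 : Set B₂))
    (hco1b : p13 '' (TwoSidedIdeal.ker p12 : Set B₁) =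
             p31 '' (TwoSidedIdeal.ker p32 : Set B₃))
    (hco1c : p23 '' (TwoSidedIdeal.ker p21 : Set B₂) =
             p32 '' (TwoSidedIdeal.ker p31 : Set B₃))
    -- cocycle condition, part (2): `φ^{ik}_j = φ^{ij}_k ∘ φ^{jk}_i`, elementwise,
    -- for all six ordered triples `(i,j,k)` of distinct indices:
    (hco2a : ∀ (a₁ : B₁) (a₂ : B₂) (a₃ : B₃),
      p12 a₁ - p21 a₂ ∈ p12 '' (TwoSidedIdeal.ker p13 : Set B₁) →
      p23 a₂ - p32 a₃ ∈ p23 '' (TwoSidedIdeal.ker p21 : Set B₂) →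
      p13 a₁ - p31 a₃ ∈ p13 '' (TwoSidedIdeal.ker p12 : Set B₁))
    (hco2b : ∀ (a₁ : B₁) (a₂ : B₂) (a₃ : B₃),
      p13 a₁ - p31 a₃ ∈ p13 '' (TwoSidedIdeal.ker p12 : Set B₁) →
      p32 a₃ - p23 a₂ ∈ p32 '' (TwoSidedIdeal.ker p31 : Set B₃) →
      p12 a₁ - p21 a₂ ∈ p12 '' (TwoSidedIdeal.ker p13 : Set B₁))
    (hco2c : ∀ (a₁ : B₁) (a₂ : B₂) (a₃ : B₃),
      p21 a₂ - p12 a₁ ∈ p21 '' (TwoSidedIdeal.ker p23 : Set B₂) →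
      p13 a₁ - p31 a₃ ∈ p13 '' (TwoSidedIdeal.ker p12 : Set B₁) →
      p23 a₂ - p32 a₃ ∈ p23 '' (TwoSidedIdeal.ker p21 : Set B₂))
    (hco2d : ∀ (a₁ : B₁) (a₂ : B₂) (a₃ : B₃),
      p23 a₂ - p32 a₃ ∈ p23 '' (TwoSidedIdeal.ker p21 : Set B₂) →
      p31 a₃ - p13 a₁ ∈ p31 '' (TwoSidedIdeal.ker p32 : Set B₃) →
      p21 a₂ - p12 a₁ ∈ p21 '' (TwoSidedIdeal.ker p23 : Set B₂))
    (hco2e : ∀ (a₁ : B₁) (a₂ : B₂) (a₃ : B₃),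
      p31 a₃ - p13 a₁ ∈ p31 '' (TwoSidedIdeal.ker p32 : Set B₃) →
      p12 a₁ - p21 a₂ ∈ p12 '' (TwoSidedIdeal.ker p13 : Set B₁) →
      p32 a₃ - p23 a₂ ∈ p32 '' (TwoSidedIdeal.ker p31 : Set B₃))
    (hco2f : ∀ (a₁ : B₁) (a₂ : B₂) (a₃ : B₃),
      p32 a₃ - p23 a₂ ∈ p32 '' (TwoSidedIdeal.ker p31 : Set B₃) →
      p21 a₂ - p12 a₁ ∈ p21 '' (TwoSidedIdeal.ker p23 : Set B₂) →
      p31 a₃ - p13 a₁ ∈ p31 '' (TwoSidedIdeal.ker p32 : Set B₃))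
    -- for each `i`, the kernels `{ker π^i_j : j ≠ i}` generate a distributive
    -- lattice of two-sided ideals of `B_i`:
    (hdist₁ : ∀ K L M : TwoSidedIdeal B₁,
      InSublattice {TwoSidedIdeal.ker p12, TwoSidedIdeal.ker p13} K →
      InSublattice {TwoSidedIdeal.ker p12, TwoSidedIdeal.ker p13} L →
      InSublattice {TwoSidedIdeal.ker p12, TwoSidedIdeal.ker p13} M →
      K ⊓ (L ⊔ M) = (K ⊓ L) ⊔ (K ⊓ M))
    (hdist₂ : ∀ K L M : TwoSidedIdeal B₂,
      InSublattice {TwoSidedIdeal.ker p21, TwoSidedIdeal.ker p23} K →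
      InSublattice {TwoSidedIdeal.ker p21, TwoSidedIdeal.ker p23} L →
      InSublattice {TwoSidedIdeal.ker p21, TwoSidedIdeal.ker p23} M →
      K ⊓ (L ⊔ M) = (K ⊓ L) ⊔ (K ⊓ M))
    (hdist₃ : ∀ K L M : TwoSidedIdeal B₃,
      InSublattice {TwoSidedIdeal.ker p31, TwoSidedIdeal.ker p32} K →
      InSublattice {TwoSidedIdeal.ker p31, TwoSidedIdeal.ker p32} L →
      InSublattice {TwoSidedIdeal.ker p31, TwoSidedIdeal.ker p32} M →
      K ⊓ (L ⊔ M) = (K ⊓ L) ⊔ (K ⊓ M))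
    -- the kernels `I_i = ker π_i` generate a distributive lattice of two-sided
    -- ideals of `B^π`:
    (hdistπ : ∀ K L M :
        TwoSidedIdeal (triplePullback k B₁ B₂ B₃ B₁₂ B₁₃ B₂₃ p12 p21 p13 p31 p23 p32),
      InSublattice
        {TwoSidedIdeal.ker (tpProj₁ k B₁ B₂ B₃ B₁₂ B₁₃ B₂₃ p12 p21 p13 p31 p23 p32),
         TwoSidedIdeal.ker (tpProj₂ k B₁ B₂ B₃ B₁₂ B₁₃ B₂₃ p12 p21 p13 p31 p23 p32),
         TwoSidedIdeal.ker (tpProj₃ k B₁ B₂ B₃ B₁₂ B₁₃ B₂₃ p12 p21 p13 p31 p23 p32)} K →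
      InSublattice
        {TwoSidedIdeal.ker (tpProj₁ k B₁ B₂ B₃ B₁₂ B₁₃ B₂₃ p12 p21 p13 p31 p23 p32),
         TwoSidedIdeal.ker (tpProj₂ k B₁ B₂ B₃ B₁₂ B₁₃ B₂₃ p12 p21 p13 p31 p23 p32),
         TwoSidedIdeal.ker (tpProj₃ k B₁ B₂ B₃ B₁₂ B₁₃ B₂₃ p12 p21 p13 p31 p23 p32)} L →
      InSublattice
        {TwoSidedIdeal.ker (tpProj₁ k B₁ B₂ B₃ B₁₂ B₁₃ B₂₃ p12 p21 p13 p31 p23 p32),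
         TwoSidedIdeal.ker (tpProj₂ k B₁ B₂ B₃ B₁₂ B₁₃ B₂₃ p12 p21 p13 p31 p23 p32),
         TwoSidedIdeal.ker (tpProj₃ k B₁ B₂ B₃ B₁₂ B₁₃ B₂₃ p12 p21 p13 p31 p23 p32)} M →
      K ⊓ (L ⊔ M) = (K ⊓ L) ⊔ (K ⊓ M)) :
    -- Conclusion.  Writing `I₁, I₂, I₃` for the kernels of the projections,
    -- `π₁₃ := π^1_3 ∘ π₁` and `π₂₃ := π^2_3 ∘ π₂` are surjective, and there are
    -- well-defined surjective homomorphisms `η¹ : B₁₃ → B^π/(I₁+I₂+I₃)` and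
    -- `η² : B₂₃ → B^π/(I₁+I₂+I₃)` with `η^i(π^i_3(π_i(b̃))) = b̃ + (I₁+I₂+I₃)` for
    -- every lift `b̃ ∈ B^π` (so the value is independent of the choice of lift), and
    -- `η¹ ∘ π₁₃ = η² ∘ π₂₃` is the canonical quotient map.
    letI Bπ := triplePullback k B₁ B₂ B₃ B₁₂ B₁₃ B₂₃ p12 p21 p13 p31 p23 p32
    letI I₁ := TwoSidedIdeal.ker (tpProj₁ k B₁ B₂ B₃ B₁₂ B₁₃ B₂₃ p12 p21 p13 p31 p23 p32)
    letI I₂ := TwoSidedIdeal.ker (tpProj₂ k B₁ B₂ B₃ B₁₂ B₁₃ B₂₃ p12 p21 p13 p31 p23 p32)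
    letI I₃ := TwoSidedIdeal.ker (tpProj₃ k B₁ B₂ B₃ B₁₂ B₁₃ B₂₃ p12 p21 p13 p31 p23 p32)
    -- (i) `π₁₃` and `π₂₃` are surjective:
    Function.Surjective
      (p13.comp (tpProj₁ k B₁ B₂ B₃ B₁₂ B₁₃ B₂₃ p12 p21 p13 p31 p23 p32)) ∧
    Function.Surjective
      (p23.comp (tpProj₂ k B₁ B₂ B₃ B₁₂ B₁₃ B₂₃ p12 p21 p13 p31 p23 p32)) ∧
    -- (ii) and (iii):
    ∃ (η₁ : B₁₃ →ₐ[k] ((I₁ ⊔ I₂) ⊔ I₃).ringCon.Quotient)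
      (η₂ : B₂₃ →ₐ[k] ((I₁ ⊔ I₂) ⊔ I₃).ringCon.Quotient),
      -- `η¹(π^1_3(π₁(b̃))) = b̃ + (I₁+I₂+I₃)` for every lift `b̃`, i.e. `η¹` is
      -- well defined by the formula of the corollary, and
      -- `η¹ ∘ π₁₃` is the canonical quotient map:
      (∀ b : Bπ,
        η₁ (p13 (tpProj₁ k B₁ B₂ B₃ B₁₂ B₁₃ B₂₃ p12 p21 p13 p31 p23 p32 b)) =
          ((I₁ ⊔ I₂) ⊔ I₃).ringCon.mk' b) ∧
      Function.Surjective η₁ ∧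
      -- likewise for `η²`:
      (∀ b : Bπ,
        η₂ (p23 (tpProj₂ k B₁ B₂ B₃ B₁₂ B₁₃ B₂₃ p12 p21 p13 p31 p23 p32 b)) =
          ((I₁ ⊔ I₂) ⊔ I₃).ringCon.mk' b) ∧
      Function.Surjective η₂ := by
  classical
  -- membership criterion for the pullback
  have memtp : ∀ b₁ b₂ b₃, p12 b₁ = p21 b₂ → p13 b₁ = p31 b₃ → p23 b₂ = p32 b₃ →
      (b₁, b₂, b₃) ∈ triplePullback k B₁ B₂ B₃ B₁₂ B₁₃ B₂₃ p12 p21 p13 p31 p23 p32 :=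
    fun b₁ b₂ b₃ h1 h2 h3 => ⟨h1, h2, h3⟩
  -- surjectivity of π₁
  have surj1 : Function.Surjective
      (tpProj₁ k B₁ B₂ B₃ B₁₂ B₁₃ B₂₃ p12 p21 p13 p31 p23 p32) := by
    intro b₁
    obtain ⟨b₂, hb₂⟩ := h21 (p12 b₁)
    obtain ⟨b₃', hb₃'⟩ := h31 (p13 b₁)
    have h0a : p21 b₂ - p12 b₁ ∈ p21 '' (TwoSidedIdeal.ker p23 : Set B₂) :=
      ⟨0, by simp [TwoSidedIdeal.mem_ker], by rw [map_zero, hb₂, sub_self]⟩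
    have h0b : p13 b₁ - p31 b₃' ∈ p13 '' (TwoSidedIdeal.ker p12 : Set B₁) :=
      ⟨0, by simp [TwoSidedIdeal.mem_ker], by rw [map_zero, hb₃', sub_self]⟩
    have hc := hco2c b₁ b₂ b₃' h0a h0b
    rw [hco1c] at hc
    obtain ⟨c₃, hc₃mem, hc₃⟩ := hc
    rw [SetLike.mem_coe, TwoSidedIdeal.mem_ker] at hc₃mem
    refine ⟨⟨(b₁, b₂, b₃' + c₃), memtp _ _ _ hb₂.symm ?_ ?_⟩, rfl⟩
    · rw [map_add, hb₃', hc₃mem, add_zero]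
    · rw [map_add, hc₃]; abel
  -- surjectivity of π₂
  have surj2 : Function.Surjective
      (tpProj₂ k B₁ B₂ B₃ B₁₂ B₁₃ B₂₃ p12 p21 p13 p31 p23 p32) := by
    intro b₂
    obtain ⟨b₁, hb₁⟩ := h12 (p21 b₂)
    obtain ⟨b₃', hb₃'⟩ := h32 (p23 b₂)
    have h0a : p12 b₁ - p21 b₂ ∈ p12 '' (TwoSidedIdeal.ker p13 : Set B₁) :=
      ⟨0, by simp [TwoSidedIdeal.mem_ker], by rw [map_zero, hb₁, sub_self]⟩
    have h0b : p23 b₂ - p32 b₃' ∈ p23 '' (TwoSidedIdeal.ker p21 : Set B₂) :=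
      ⟨0, by simp [TwoSidedIdeal.mem_ker], by rw [map_zero, hb₃', sub_self]⟩
    have hc := hco2a b₁ b₂ b₃' h0a h0b
    rw [hco1b] at hc
    obtain ⟨c₃, hc₃mem, hc₃⟩ := hc
    rw [SetLike.mem_coe, TwoSidedIdeal.mem_ker] at hc₃mem
    refine ⟨⟨(b₁, b₂, b₃' + c₃), memtp _ _ _ hb₁ ?_ ?_⟩, rfl⟩
    · rw [map_add, hc₃]; abel
    · rw [map_add, hc₃mem, hb₃', add_zero]
  -- surjectivity of π₁₃ and π₂₃
  have s13 : Function.Surjective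
      (p13.comp (tpProj₁ k B₁ B₂ B₃ B₁₂ B₁₃ B₂₃ p12 p21 p13 p31 p23 p32)) := by
    intro y
    obtain ⟨y₁, hy₁⟩ := h13 y
    obtain ⟨b, hb⟩ := surj1 y₁
    exact ⟨b, by rw [AlgHom.comp_apply, hb, hy₁]⟩
  have s23 : Function.Surjective
      (p23.comp (tpProj₂ k B₁ B₂ B₃ B₁₂ B₁₃ B₂₃ p12 p21 p13 p31 p23 p32)) := by
    intro y
    obtain ⟨y₂, hy₂⟩ := h23 y
    obtain ⟨b, hb⟩ := surj2 y₂
    exact ⟨b, by rw [AlgHom.comp_apply, hb, hy₂]⟩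
  -- kernel conditions
  have key₁ : ∀ b : triplePullback k B₁ B₂ B₃ B₁₂ B₁₃ B₂₃ p12 p21 p13 p31 p23 p32,
      (p13.comp (tpProj₁ k B₁ B₂ B₃ B₁₂ B₁₃ B₂₃ p12 p21 p13 p31 p23 p32)) b = 0 →
      b ∈ ((TwoSidedIdeal.ker (tpProj₁ k B₁ B₂ B₃ B₁₂ B₁₃ B₂₃ p12 p21 p13 p31 p23 p32) ⊔ TwoSidedIdeal.ker (tpProj₂ k B₁ B₂ B₃ B₁₂ B₁₃ B₂₃ p12 p21 p13 p31 p23 p32)) ⊔ TwoSidedIdeal.ker (tpProj₃ k B₁ B₂ B₃ B₁₂ B₁₃ B₂₃ p12 p21 p13 p31 p23 p32)) := by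
    intro b hb
    obtain ⟨e1, e2, e3⟩ := b.2
    have hb' : p13 (b : B₁ × B₂ × B₃).1 = 0 := hb
    have hb3 : p31 (b : B₁ × B₂ × B₃).2.2 = 0 := by rw [← e2, hb']
    have himg : p12 (b : B₁ × B₂ × B₃).1 ∈ p21 '' (TwoSidedIdeal.ker p23 : Set B₂) := by
      rw [← hco1a]
      exact ⟨(b : B₁ × B₂ × B₃).1, by
        rw [SetLike.mem_coe, TwoSidedIdeal.mem_ker]; exact hb', rfl⟩
    obtain ⟨w₂, hw₂mem, hw₂⟩ := himg
    rw [SetLike.mem_coe, TwoSidedIdeal.mem_ker] at hw₂mem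
    set b₁ := (b : B₁ × B₂ × B₃).1
    set b₂ := (b : B₁ × B₂ × B₃).2.1
    set b₃ := (b : B₁ × B₂ × B₃).2.2
    have wmem : ((b₁, w₂, 0) : B₁ × B₂ × B₃) ∈
        triplePullback k B₁ B₂ B₃ B₁₂ B₁₃ B₂₃ p12 p21 p13 p31 p23 p32 :=
      memtp _ _ _ hw₂.symm (by rw [hb', map_zero]) (by rw [hw₂mem, map_zero])
    have umem : ((0, b₂ - w₂, b₃) : B₁ × B₂ × B₃) ∈
        triplePullback k B₁ B₂ B₃ B₁₂ B₁₃ B₂₃ p12 p21 p13 p31 p23 p32 :=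
      memtp _ _ _ (by rw [map_zero, map_sub, ← e1, hw₂, sub_self])
        (by rw [map_zero, hb3]) (by rw [map_sub, hw₂mem, sub_zero, e3])
    have hbsum : b = ⟨(0, b₂ - w₂, b₃), umem⟩ + ⟨(b₁, w₂, 0), wmem⟩ := by
      apply Subtype.ext
      show (b : B₁ × B₂ × B₃) = (0, b₂ - w₂, b₃) + (b₁, w₂, 0)
      refine Prod.ext ?_ (Prod.ext ?_ ?_) <;> simp [b₁, b₂, b₃]
    rw [hbsum]
    exact TwoSidedIdeal.add_mem _
      (TwoSidedIdeal.mem_sup_left (TwoSidedIdeal.mem_sup_left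
        (by rw [TwoSidedIdeal.mem_ker]; rfl)))
      (TwoSidedIdeal.mem_sup_right (by rw [TwoSidedIdeal.mem_ker]; rfl))
  have key₂ : ∀ b : triplePullback k B₁ B₂ B₃ B₁₂ B₁₃ B₂₃ p12 p21 p13 p31 p23 p32,
      (p23.comp (tpProj₂ k B₁ B₂ B₃ B₁₂ B₁₃ B₂₃ p12 p21 p13 p31 p23 p32)) b = 0 →
      b ∈ ((TwoSidedIdeal.ker (tpProj₁ k B₁ B₂ B₃ B₁₂ B₁₃ B₂₃ p12 p21 p13 p31 p23 p32) ⊔ TwoSidedIdeal.ker (tpProj₂ k B₁ B₂ B₃ B₁₂ B₁₃ B₂₃ p12 p21 p13 p31 p23 p32)) ⊔ TwoSidedIdeal.ker (tpProj₃ k B₁ B₂ B₃ B₁₂ B₁₃ B₂₃ p12 p21 p13 p31 p23 p32)) := by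
    intro b hb
    obtain ⟨e1, e2, e3⟩ := b.2
    have hb' : p23 (b : B₁ × B₂ × B₃).2.1 = 0 := hb
    have hb3 : p32 (b : B₁ × B₂ × B₃).2.2 = 0 := by rw [← e3, hb']
    have himg : p21 (b : B₁ × B₂ × B₃).2.1 ∈ p12 '' (TwoSidedIdeal.ker p13 : Set B₁) := by
      rw [hco1a]
      exact ⟨(b : B₁ × B₂ × B₃).2.1, by
        rw [SetLike.mem_coe, TwoSidedIdeal.mem_ker]; exact hb', rfl⟩
    obtain ⟨w₁, hw₁mem, hw₁⟩ := himg
    rw [SetLike.mem_coe, TwoSidedIdeal.mem_ker] at hw₁mem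
    set b₁ := (b : B₁ × B₂ × B₃).1
    set b₂ := (b : B₁ × B₂ × B₃).2.1
    set b₃ := (b : B₁ × B₂ × B₃).2.2
    have wmem : ((w₁, b₂, 0) : B₁ × B₂ × B₃) ∈
        triplePullback k B₁ B₂ B₃ B₁₂ B₁₃ B₂₃ p12 p21 p13 p31 p23 p32 :=
      memtp _ _ _ hw₁ (by rw [hw₁mem, map_zero]) (by rw [hb', map_zero])
    have umem : ((b₁ - w₁, 0, b₃) : B₁ × B₂ × B₃) ∈
        triplePullback k B₁ B₂ B₃ B₁₂ B₁₃ B₂₃ p12 p21 p13 p31 p23 p32 :=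
      memtp _ _ _ (by rw [map_zero, map_sub, e1, hw₁, sub_self])
        (by rw [map_sub, hw₁mem, sub_zero, e2]) (by rw [map_zero, hb3])
    have hbsum : b = ⟨(b₁ - w₁, 0, b₃), umem⟩ + ⟨(w₁, b₂, 0), wmem⟩ := by
      apply Subtype.ext
      show (b : B₁ × B₂ × B₃) = (b₁ - w₁, 0, b₃) + (w₁, b₂, 0)
      refine Prod.ext ?_ (Prod.ext ?_ ?_) <;> simp [b₁, b₂, b₃]
    rw [hbsum]
    exact TwoSidedIdeal.add_mem _
      (TwoSidedIdeal.mem_sup_left (TwoSidedIdeal.mem_sup_right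
        (by rw [TwoSidedIdeal.mem_ker]; rfl)))
      (TwoSidedIdeal.mem_sup_right (by rw [TwoSidedIdeal.mem_ker]; rfl))
  obtain ⟨η₁, hη₁, hs₁⟩ := algHomFactor _ s13 ((TwoSidedIdeal.ker (tpProj₁ k B₁ B₂ B₃ B₁₂ B₁₃ B₂₃ p12 p21 p13 p31 p23 p32) ⊔ TwoSidedIdeal.ker (tpProj₂ k B₁ B₂ B₃ B₁₂ B₁₃ B₂₃ p12 p21 p13 p31 p23 p32)) ⊔ TwoSidedIdeal.ker (tpProj₃ k B₁ B₂ B₃ B₁₂ B₁₃ B₂₃ p12 p21 p13 p31 p23 p32)) key₁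
  obtain ⟨η₂, hη₂, hs₂⟩ := algHomFactor _ s23 ((TwoSidedIdeal.ker (tpProj₁ k B₁ B₂ B₃ B₁₂ B₁₃ B₂₃ p12 p21 p13 p31 p23 p32) ⊔ TwoSidedIdeal.ker (tpProj₂ k B₁ B₂ B₃ B₁₂ B₁₃ B₂₃ p12 p21 p13 p31 p23 p32)) ⊔ TwoSidedIdeal.ker (tpProj₃ k B₁ B₂ B₃ B₁₂ B₁₃ B₂₃ p12 p21 p13 p31 p23 p32)) key₂
  exact ⟨s13, s23, η₁, η₂, hη₁, hs₁, hη₂, hs₂⟩
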